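/- Let N ≥ 1 be such that N+1 is a prime number. Then the sandpile group G_{Γ_N} on an N×N square domain Γ_N ⊂ ℤ² contains a cyclic subgroup of order N+1. -/

import Mathlib

/-- Two vertices of `ℤ²` are adjacent iff their Euclidean distance is `1`. -/
def adj (u v : ℤ × ℤ) : Prop := (u.1 - v.1) ^ 2 + (u.2 - v.2) ^ 2 = 1

instance : DecidableRel adj := fun u v => by unfold adj; infer_instance

/-- The reduced Laplacian of a finite domain `Γ ⊂ ℤ²`. -/
def lap {R : Type*} [CommRing R] (Γ : Finset (ℤ × ℤ)) (f : ↥Γ → R) : ↥Γ → R :=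
  fun v => (∑ w ∈ Γ.attach.filter (fun w => adj w.1 v.1), f w) - 4 * f v

lemma lap_add {R : Type*} [CommRing R] (Γ : Finset (ℤ × ℤ)) (f g : ↥Γ → R) :
    lap Γ (f + g) = lap Γ f + lap Γ g := by
  funext v; simp [lap, Finset.sum_add_distrib]; ring

lemma lap_neg {R : Type*} [CommRing R] (Γ : Finset (ℤ × ℤ)) (f : ↥Γ → R) :
    lap Γ (-f) = -(lap Γ f) := by
  funext v; simp [lap]; ring

lemma lap_smul {R : Type*} [CommRing R] (Γ : Finset (ℤ × ℤ)) (c : R) (f : ↥Γ → R) :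
    lap Γ (c • f) = c • lap Γ f := by
  funext v
  simp only [lap, Pi.smul_apply, smul_eq_mul, mul_sub, Finset.mul_sum]
  ring

lemma lap_zero {R : Type*} [CommRing R] (Γ : Finset (ℤ × ℤ)) :
    lap Γ (0 : ↥Γ → R) = 0 := by
  funext v; simp [lap]

/-- The boundary `∂Γ`: vertices of `Γ` adjacent to some vertex of `ℤ² \ Γ`. -/
noncomputable def boundary (Γ : Finset (ℤ × ℤ)) : Finset (ℤ × ℤ) :=
  @Finset.filter _ (fun v => ∃ w : ℤ × ℤ, w ∉ Γ ∧ adj w v) (Classical.decPred _) Γ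

lemma boundary_subset (Γ : Finset (ℤ × ℤ)) : boundary Γ ⊆ Γ :=
  @Finset.filter_subset _ (fun v => ∃ w : ℤ × ℤ, w ∉ Γ ∧ adj w v) (Classical.decPred _) Γ

/-- A function on `Γ` is harmonic if its Laplacian vanishes on the interior `Γ \ ∂Γ`. -/
def Harmonic {R : Type*} [CommRing R] (Γ : Finset (ℤ × ℤ)) (f : ↥Γ → R) : Prop :=
  ∀ v : ↥Γ, (v : ℤ × ℤ) ∉ boundary Γ → lap Γ f v = 0

/-- `Γ ⊂ ℤ²` is a convex domain if it is the set of lattice points of a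
convex open subset of `ℝ²`. -/
def IsConvexDomain (Γ : Finset (ℤ × ℤ)) : Prop :=
  ∃ P : Set (ℝ × ℝ), Convex ℝ P ∧ IsOpen P ∧
    ∀ v : ℤ × ℤ, v ∈ Γ ↔ ((v.1 : ℝ), (v.2 : ℝ)) ∈ P

/-- The reduced Laplacian as an additive group homomorphism on `ℤ^Γ`. -/
def lapHom (Γ : Finset (ℤ × ℤ)) : (↥Γ → ℤ) →+ (↥Γ → ℤ) where
  toFun := lap Γ
  map_zero' := lap_zero Γ
  map_add' := lap_add Γ

/-- The sandpile group `G_Γ = ℤ^Γ / Δ_Γ(ℤ^Γ)`. -/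
def SandpileGroup (Γ : Finset (ℤ × ℤ)) : Type :=
  (↥Γ → ℤ) ⧸ (lapHom Γ).range

instance (Γ : Finset (ℤ × ℤ)) : AddCommGroup (SandpileGroup Γ) :=
  inferInstanceAs (AddCommGroup ((↥Γ → ℤ) ⧸ (lapHom Γ).range))

/-- The canonical projection `ℤ^Γ → G_Γ`. -/
def sandMk (Γ : Finset (ℤ × ℤ)) : (↥Γ → ℤ) →+ SandpileGroup Γ :=
  QuotientAddGroup.mk' _

/-- The `N×N` square domain `Γ_N = {1, …, N} × {1, …, N} ⊂ ℤ²`. -/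
noncomputable def squareDomain (N : ℕ) : Finset (ℤ × ℤ) :=
  Finset.Icc 1 (N : ℤ) ×ˢ Finset.Icc 1 (N : ℤ)
lemma adj_symm {w v : ℤ × ℤ} (h : adj w v) : adj v w := by
  unfold adj at *; linear_combination h

lemma adj_iff {w v : ℤ × ℤ} : adj w v ↔
    w = (v.1 + 1, v.2) ∨ w = (v.1 - 1, v.2) ∨ w = (v.1, v.2 + 1) ∨ w = (v.1, v.2 - 1) := by
  constructor
  · intro h
    unfold adj at h
    set a := w.1 - v.1 with ha
    set b := w.2 - v.2 with hb
    have hw : w = (v.1 + a, v.2 + b) := by rw [ha, hb]; ext <;> simp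
    have h1 : a ≤ 1 := by nlinarith [sq_nonneg b, sq_nonneg (a - 1)]
    have h2 : -1 ≤ a := by nlinarith [sq_nonneg b, sq_nonneg (a + 1)]
    have h3 : b ≤ 1 := by nlinarith [sq_nonneg a, sq_nonneg (b - 1)]
    have h4 : -1 ≤ b := by nlinarith [sq_nonneg a, sq_nonneg (b + 1)]
    rw [hw]
    simp only [Prod.ext_iff, Prod.fst, Prod.snd]
    interval_cases a <;> interval_cases b <;> norm_num at h <;> omega
  · rintro (rfl | rfl | rfl | rfl) <;> (unfold adj; simp)

lemma mem_squareDomain {N : ℕ} {a : ℤ × ℤ} :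
    a ∈ squareDomain N ↔ 1 ≤ a.1 ∧ a.1 ≤ (N : ℤ) ∧ 1 ≤ a.2 ∧ a.2 ≤ (N : ℤ) := by
  simp [squareDomain, Finset.mem_Icc, and_assoc]

/-- The four potential neighbors of a point. -/
def nbrs (v : ℤ × ℤ) : Finset (ℤ × ℤ) :=
  {(v.1 + 1, v.2), (v.1 - 1, v.2), (v.1, v.2 + 1), (v.1, v.2 - 1)}

lemma mem_nbrs {w v : ℤ × ℤ} : w ∈ nbrs v ↔ adj w v := by
  rw [adj_iff]; simp [nbrs]

lemma card_nbrs_le (v : ℤ × ℤ) : (nbrs v).card ≤ 4 := by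
  apply le_trans (Finset.card_insert_le _ _)
  apply Nat.succ_le_succ
  apply le_trans (Finset.card_insert_le _ _)
  apply Nat.succ_le_succ
  apply le_trans (Finset.card_insert_le _ _)
  apply Nat.succ_le_succ
  simp

/-- Sum over the attached filtered set equals sum over the filtered set. -/
lemma sum_attach_filter {R : Type*} [AddCommMonoid R] (Γ : Finset (ℤ × ℤ))
    (P : ℤ × ℤ → Prop) [DecidablePred P] (g : ℤ × ℤ → R) :
    ∑ w ∈ Γ.attach.filter (fun w => P w.1), g w.1 = ∑ a ∈ Γ.filter P, g a := by
  rw [Finset.sum_filter, Finset.sum_filter, Finset.sum_attach Γ (fun a => if P a then g a else 0)]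

/-- Self-adjointness of the reduced Laplacian. -/
lemma lap_symm {R : Type*} [CommRing R] (Γ : Finset (ℤ × ℤ)) (h f : ↥Γ → R) :
    ∑ v ∈ Γ.attach, h v * lap Γ f v = ∑ v ∈ Γ.attach, f v * lap Γ h v := by
  have key : ∀ g₁ g₂ : ↥Γ → R,
      ∑ v ∈ Γ.attach, ∑ w ∈ Γ.attach.filter (fun w => adj w.1 v.1), g₁ v * g₂ w
      = ∑ v ∈ Γ.attach, ∑ w ∈ Γ.attach.filter (fun w => adj w.1 v.1), g₁ w * g₂ v := by
    intro g₁ g₂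
    simp only [Finset.sum_filter]
    rw [Finset.sum_comm]
    refine Finset.sum_congr rfl fun w _ => Finset.sum_congr rfl fun v _ => ?_
    by_cases hadj : adj w.1 v.1
    · rw [if_pos hadj, if_pos (adj_symm hadj)]
    · rw [if_neg hadj, if_neg (fun hc => hadj (adj_symm hc))]
  simp only [lap, mul_sub, Finset.sum_sub_distrib, Finset.mul_sum]
  rw [key h f]
  congr 1
  · exact Finset.sum_congr rfl fun v _ => Finset.sum_congr rfl fun w _ => by ring
  · exact Finset.sum_congr rfl fun v _ => by ring

lemma sup_nonpos_of_lap_eq_zero (N : ℕ) (hN : 1 ≤ N) (g : ↥(squareDomain N) → ℤ)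
    (hg : lap (squareDomain N) g = 0) (v : ↥(squareDomain N)) : g v ≤ 0 := by
  have hne : (squareDomain N).attach.Nonempty := ⟨v, Finset.mem_attach _ _⟩
  set M := (squareDomain N).attach.sup' hne g with hM
  suffices hM0 : M ≤ 0 by
    exact le_trans (Finset.le_sup' g (Finset.mem_attach _ _)) hM0
  by_contra hMpos
  push_neg at hMpos
  obtain ⟨v₀, hv₀, hv₀M⟩ := Finset.exists_mem_eq_sup' hne g
  have hfilt : ((squareDomain N).attach.filter (fun w => g w = M)).Nonempty :=
    ⟨v₀, Finset.mem_filter.mpr ⟨hv₀, hv₀M.symm⟩⟩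
  obtain ⟨z, hz, hzmin⟩ := Finset.exists_min_image _ (fun w => w.1.1) hfilt
  rw [Finset.mem_filter] at hz
  have hgz : g z = M := hz.2
  set s := (squareDomain N).attach.filter (fun w => adj w.1 z.1) with hs
  have hsum : ∑ w ∈ s, g w = 4 * M := by
    have := congr_fun hg z
    simp only [lap, Pi.zero_apply] at this
    rw [hgz] at this
    rw [hs]
    omega
  have hle : ∀ w ∈ s, g w ≤ M := fun w _ => Finset.le_sup' g (Finset.mem_attach _ _)
  set u : ℤ × ℤ := (z.1.1 - 1, z.1.2) with hu
  have hadj_u : adj u z.1 := adj_iff.mpr (Or.inr (Or.inl rfl))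
  -- helper : sum over a set mapping into (nbrs z.1).erase u is ≤ 3 * M
  have hcard3 : ∀ t : Finset ↥(squareDomain N), (∀ w ∈ t, (w : ℤ × ℤ) ∈ (nbrs z.1).erase u) →
      (∀ w ∈ t, g w ≤ M) → ∑ w ∈ t, g w ≤ 3 * M := by
    intro t ht hle'
    have hcard : t.card ≤ 3 := by
      have h1 : t.card ≤ ((nbrs z.1).erase u).card :=
        Finset.card_le_card_of_injOn (fun w => (w : ℤ × ℤ)) ht
          (Set.injOn_of_injective Subtype.coe_injective)
      have h2 : ((nbrs z.1).erase u).card = (nbrs z.1).card - 1 :=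
        Finset.card_erase_of_mem (mem_nbrs.mpr hadj_u)
      have h3 := card_nbrs_le z.1
      omega
    calc ∑ w ∈ t, g w ≤ t.card • M := Finset.sum_le_card_nsmul t g M hle'
      _ ≤ 3 • M := nsmul_le_nsmul_left (le_of_lt hMpos) hcard
      _ = 3 * M := by simp [smul_eq_mul]
  by_cases huΓ : u ∈ squareDomain N
  · -- the left neighbor is in Γ; it has value < M by minimality
    have hus : (⟨u, huΓ⟩ : ↥(squareDomain N)) ∈ s := Finset.mem_filter.mpr ⟨Finset.mem_attach _ _, hadj_u⟩
    have hgu : g ⟨u, huΓ⟩ ≤ M - 1 := by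
      have h1 : g ⟨u, huΓ⟩ ≤ M := Finset.le_sup' g (Finset.mem_attach _ _)
      rcases eq_or_lt_of_le h1 with heq | hlt
      · exfalso
        have hmem : (⟨u, huΓ⟩ : ↥(squareDomain N)) ∈ (squareDomain N).attach.filter (fun w => g w = M) :=
          Finset.mem_filter.mpr ⟨Finset.mem_attach _ _, heq⟩
        have := hzmin _ hmem
        simp only [hu] at this
        omega
      · omega
    have hsplit : g ⟨u, huΓ⟩ + ∑ w ∈ s.erase ⟨u, huΓ⟩, g w = ∑ w ∈ s, g w :=
      Finset.add_sum_erase s g hus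
    have hrest : ∑ w ∈ s.erase ⟨u, huΓ⟩, g w ≤ 3 * M := by
      apply hcard3
      · intro w hw
        rw [Finset.mem_erase] at hw
        refine Finset.mem_erase.mpr ⟨?_, ?_⟩
        · intro hcontra
          exact hw.1 (Subtype.ext hcontra)
        · exact mem_nbrs.mpr (Finset.mem_filter.mp hw.2).2
      · intro w hw
        exact hle w (Finset.mem_erase.mp hw).2
    omega
  · -- the left neighbor is outside Γ, so z has at most 3 neighbors
    have hrest : ∑ w ∈ s, g w ≤ 3 * M := by
      apply hcard3
      · intro w hw
        refine Finset.mem_erase.mpr ⟨?_, mem_nbrs.mpr (Finset.mem_filter.mp hw).2⟩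
        intro hcontra
        rw [← hcontra] at huΓ
        exact huΓ w.2
      · exact hle
    omega

lemma lap_injective_int (N : ℕ) (hN : 1 ≤ N) (f : ↥(squareDomain N) → ℤ)
    (hf : lap (squareDomain N) f = 0) : f = 0 := by
  funext v
  have h1 : f v ≤ 0 := sup_nonpos_of_lap_eq_zero N hN f hf v
  have h2 : (-f) v ≤ 0 := by
    apply sup_nonpos_of_lap_eq_zero N hN (-f) _ v
    rw [lap_neg, hf]; simp
  simp only [Pi.neg_apply] at h2
  simp only [Pi.zero_apply]
  omega

/-- The matrix of the reduced Laplacian. -/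
def lapMatrix (Γ : Finset (ℤ × ℤ)) : Matrix ↥Γ ↥Γ ℤ :=
  fun v w => (if adj w.1 v.1 then 1 else 0) - (if w = v then 4 else 0)

lemma lap_eq_mulVec (Γ : Finset (ℤ × ℤ)) (f : ↥Γ → ℤ) :
    lap Γ f = (lapMatrix Γ).mulVec f := by
  funext v
  simp only [lap, lapMatrix, Matrix.mulVec, dotProduct, sub_mul, ite_mul, one_mul,
    zero_mul, Finset.sum_sub_distrib]
  congr 1
  · rw [Finset.sum_filter, Finset.univ_eq_attach]
  · rw [Finset.univ_eq_attach, Finset.sum_ite_eq' Γ.attach v (fun w => 4 * f w)]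
    simp [Finset.mem_attach, mul_comm]

lemma lapMatrix_det_ne_zero (N : ℕ) (hN : 1 ≤ N) :
    (lapMatrix (squareDomain N)).det ≠ 0 := by
  intro h
  obtain ⟨v, hv, h0⟩ := Matrix.exists_mulVec_eq_zero_iff.mpr h
  exact hv (lap_injective_int N hN v (by rw [lap_eq_mulVec]; exact h0))

lemma det_smul_sandMk_eq_zero (N : ℕ) (u : ↥(squareDomain N) → ℤ) :
    (lapMatrix (squareDomain N)).det • sandMk (squareDomain N) u = 0 := by
  rw [← map_zsmul]
  apply (QuotientAddGroup.eq_zero_iff _).mpr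
  refine ⟨(lapMatrix (squareDomain N)).adjugate.mulVec u, ?_⟩
  show lap _ _ = _
  rw [lap_eq_mulVec, Matrix.mulVec_mulVec, Matrix.mul_adjugate, Matrix.smul_mulVec,
    Matrix.one_mulVec]

lemma filter_adj_eq (Γ : Finset (ℤ × ℤ)) (v : ℤ × ℤ) :
    Γ.filter (fun a => adj a v) = (nbrs v).filter (· ∈ Γ) := by
  ext a
  simp only [Finset.mem_filter, mem_nbrs]
  tauto

lemma lap_xy_eq_zero (N : ℕ) :
    lap (squareDomain N) (fun v => ((v.1.1 : ZMod (N + 1)) * (v.1.2 : ZMod (N + 1)))) = 0 := by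
  funext v
  obtain ⟨⟨x, y⟩, hv⟩ := v
  rw [mem_squareDomain] at hv
  simp only [lap, Pi.zero_apply]
  have h1 : ∑ w ∈ (squareDomain N).attach.filter (fun w => adj w.1 (x, y)),
      ((w.1.1 : ZMod (N + 1)) * (w.1.2 : ZMod (N + 1)))
      = ∑ a ∈ (squareDomain N).filter (fun a => adj a (x, y)),
        ((a.1 : ZMod (N + 1)) * (a.2 : ZMod (N + 1))) :=
    sum_attach_filter (squareDomain N) (fun a => adj a (x, y))
      (fun a => ((a.1 : ZMod (N + 1)) * (a.2 : ZMod (N + 1))))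
  rw [h1, filter_adj_eq]
  rw [Finset.sum_filter_of_ne]
  · have hd1 : ((x + 1, y) : ℤ × ℤ) ∉ ({(x - 1, y), (x, y + 1), (x, y - 1)} : Finset (ℤ × ℤ)) := by
      simp only [Finset.mem_insert, Finset.mem_singleton, Prod.ext_iff]; omega
    have hd2 : ((x - 1, y) : ℤ × ℤ) ∉ ({(x, y + 1), (x, y - 1)} : Finset (ℤ × ℤ)) := by
      simp only [Finset.mem_insert, Finset.mem_singleton, Prod.ext_iff]; omega
    have hd3 : ((x, y + 1) : ℤ × ℤ) ∉ ({(x, y - 1)} : Finset (ℤ × ℤ)) := by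
      simp only [Finset.mem_insert, Finset.mem_singleton, Prod.ext_iff]; omega
    rw [show nbrs (x, y) = insert (x + 1, y) (insert (x - 1, y) (insert (x, y + 1)
      ({(x, y - 1)} : Finset (ℤ × ℤ)))) from rfl]
    rw [Finset.sum_insert hd1, Finset.sum_insert hd2, Finset.sum_insert hd3,
      Finset.sum_singleton]
    push_cast
    ring
  · -- points of nbrs outside Γ have H = 0
    intro a ha hne
    by_contra haΓ
    apply hne
    simp only [nbrs, Finset.mem_insert, Finset.mem_singleton] at ha
    have hzero : (a.1 : ZMod (N + 1)) = 0 ∨ (a.2 : ZMod (N + 1)) = 0 := by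
      rcases ha with rfl | rfl | rfl | rfl <;> simp only [] <;>
        rw [mem_squareDomain] at haΓ <;> push_neg at haΓ
      · left
        have hx : (x + 1 : ℤ) = ((N + 1 : ℕ) : ℤ) := by push_cast; omega
        rw [hx, Int.cast_natCast, ZMod.natCast_self]
      · left
        have hx : (x - 1 : ℤ) = 0 := by omega
        rw [hx, Int.cast_zero]
      · right
        have hy : (y + 1 : ℤ) = ((N + 1 : ℕ) : ℤ) := by push_cast; omega
        rw [hy, Int.cast_natCast, ZMod.natCast_self]
      · right
        have hy : (y - 1 : ℤ) = 0 := by omega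
        rw [hy, Int.cast_zero]
    rcases hzero with h | h <;> rw [h] <;> ring

/-- The invariant homomorphism `u ↦ ∑ x·y·u(x,y) mod N+1`. -/
noncomputable def phiAux (N : ℕ) : (↥(squareDomain N) → ℤ) →+ ZMod (N + 1) where
  toFun u := ∑ v ∈ (squareDomain N).attach,
    (v.1.1 : ZMod (N + 1)) * (v.1.2 : ZMod (N + 1)) * ((u v : ℤ) : ZMod (N + 1))
  map_zero' := by simp
  map_add' := fun u w => by
    rw [← Finset.sum_add_distrib]
    refine Finset.sum_congr rfl fun v _ => ?_
    simp only [Pi.add_apply]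
    push_cast
    ring

lemma phiAux_lap (N : ℕ) (w : ↥(squareDomain N) → ℤ) :
    phiAux N (lap (squareDomain N) w) = 0 := by
  have hcast : ∀ v, ((lap (squareDomain N) w v : ℤ) : ZMod (N + 1))
      = lap (squareDomain N) (fun x => ((w x : ℤ) : ZMod (N + 1))) v := by
    intro v
    simp only [lap]
    push_cast
    ring
  show ∑ v ∈ (squareDomain N).attach,
    (v.1.1 : ZMod (N + 1)) * (v.1.2 : ZMod (N + 1)) * ((lap (squareDomain N) w v : ℤ) : ZMod (N + 1)) = 0
  simp_rw [hcast]
  rw [lap_symm (squareDomain N) (fun v => (v.1.1 : ZMod (N + 1)) * (v.1.2 : ZMod (N + 1)))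
    (fun x => ((w x : ℤ) : ZMod (N + 1)))]
  rw [lap_xy_eq_zero N]
  simp

/-- If `N+1` is prime, the sandpile group on the `N×N`
square domain contains a cyclic subgroup of order `N+1`. -/
theorem square_has_cyclic_subgroup_prime (N : ℕ) (hN : 1 ≤ N) (hp : Nat.Prime (N + 1)) :
    ∃ S : AddSubgroup (SandpileGroup (squareDomain N)),
      IsAddCyclic ↥S ∧ Nat.card ↥S = N + 1 := by
  set Γ := squareDomain N with hΓ
  -- the invariant homomorphism on the sandpile group
  have hvanish : ∀ u ∈ (lapHom Γ).range, phiAux N u = 0 := by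
    rintro u ⟨w, rfl⟩
    exact phiAux_lap N w
  let φ : SandpileGroup Γ →+ ZMod (N + 1) :=
    QuotientAddGroup.lift (lapHom Γ).range (phiAux N) hvanish
  -- the distinguished element
  have h11 : ((1, 1) : ℤ × ℤ) ∈ Γ := by
    rw [hΓ, mem_squareDomain]
    refine ⟨le_refl _, ?_, le_refl _, ?_⟩ <;> (show (1 : ℤ) ≤ (N : ℤ); exact_mod_cast hN)
  let v₀ : ↥Γ := ⟨(1, 1), h11⟩
  let x : SandpileGroup Γ := sandMk Γ (Pi.single v₀ 1)
  have hφmk : ∀ u, φ (sandMk Γ u) = phiAux N u := fun u =>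
    QuotientAddGroup.lift_mk' (lapHom Γ).range hvanish u
  have hφx : φ x = 1 := by
    rw [hφmk]
    unfold phiAux
    simp only [AddMonoidHom.coe_mk, ZeroHom.coe_mk]
    have key : ∀ v : ↥Γ, (v.1.1 : ZMod (N + 1)) * (v.1.2 : ZMod (N + 1))
        * (((Pi.single v₀ (1 : ℤ) : ↥Γ → ℤ) v : ℤ) : ZMod (N + 1))
        = if v = v₀ then (v.1.1 : ZMod (N + 1)) * (v.1.2 : ZMod (N + 1)) else 0 := by
      intro v
      rw [Pi.single_apply]
      split <;> simp
    rw [Finset.sum_congr rfl fun v _ => key v]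
    rw [Finset.sum_ite_eq' Γ.attach v₀ (fun v => (v.1.1 : ZMod (N + 1)) * (v.1.2 : ZMod (N + 1)))]
    simp [v₀]
  -- x has finite order
  have hdet : (lapMatrix Γ).det ≠ 0 := lapMatrix_det_ne_zero N hN
  have hdx : (lapMatrix Γ).det • x = 0 := det_smul_sandMk_eq_zero N _
  have hfin : IsOfFinAddOrder x := by
    rw [isOfFinAddOrder_iff_nsmul_eq_zero]
    refine ⟨(lapMatrix Γ).det.natAbs, Int.natAbs_pos.mpr hdet, ?_⟩
    rcases Int.natAbs_eq (lapMatrix Γ).det with h | h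
    · rw [← natCast_zsmul, ← h, hdx]
    · rw [← natCast_zsmul, ← neg_neg ((lapMatrix Γ).det.natAbs : ℤ), ← h, neg_zsmul, hdx, neg_zero]
  set n := addOrderOf x with hn
  have hnpos : 0 < n := hfin.addOrderOf_pos
  have hpn : (N + 1) ∣ n := by
    have h1 : φ (n • x) = (n : ZMod (N + 1)) := by
      rw [map_nsmul, hφx]
      simp
    rw [addOrderOf_nsmul_eq_zero x, map_zero] at h1
    exact (ZMod.natCast_eq_zero_iff n (N + 1)).mp h1.symm
  -- the element of order exactly N+1
  set y : SandpileGroup Γ := (n / (N + 1)) • x with hy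
  have hpy : (N + 1) • y = 0 := by
    rw [hy, smul_smul, Nat.mul_div_cancel' hpn, hn, addOrderOf_nsmul_eq_zero]
  have hydvd : addOrderOf y ∣ N + 1 := addOrderOf_dvd_iff_nsmul_eq_zero.mpr hpy
  have hyne : y ≠ 0 := by
    intro h0
    have hdvd : n ∣ n / (N + 1) := by
      rw [hn]
      exact addOrderOf_dvd_iff_nsmul_eq_zero.mpr h0
    have hq : 0 < n / (N + 1) := Nat.div_pos (Nat.le_of_dvd hnpos hpn) (Nat.succ_pos N)
    have := Nat.le_of_dvd hq hdvd
    have := Nat.div_lt_self hnpos hp.one_lt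
    omega
  have hyord : addOrderOf y = N + 1 := by
    rcases (Nat.Prime.eq_one_or_self_of_dvd hp _ hydvd) with h | h
    · exact absurd (AddMonoid.addOrderOf_eq_one_iff.mp h) hyne
    · exact h
  refine ⟨AddSubgroup.zmultiples y, ?_, ?_⟩
  · refine ⟨⟨⟨y, AddSubgroup.mem_zmultiples y⟩, ?_⟩⟩
    rintro ⟨x', hx'⟩
    obtain ⟨k, hk⟩ := AddSubgroup.mem_zmultiples_iff.mp hx'
    exact ⟨k, Subtype.ext (by simpa using hk)⟩
  · rw [Nat.card_zmultiples, hyord]
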